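/- Let x be a string over {0,1} with involution σ↦1−σ, and suppose x contains exactly one occurrence of the substring 11(1̄1̄) (where 1̄=0), i.e., exactly one occurrence of 1100. If y is a substring of x containing this occurrence, then y occurs exactly once in x, and any sequence of hairpin deletions transforming x into y never deletes any position of that occurrence of y: every intermediate string x[i..j] satisfies [i_y..j_y] ⊆ [i..j], where x[i_y..j_y] is the occurrence of y. -/

import Mathlib

/-- characterwise complement followed by reversal: the "reverse complement" ⟵w -/
def rc (w : List Bool) : List Bool := (w.map (fun b => !b)).reverse

/-- one (modified) hairpin deletion step: remove a prefix (left) or suffix (right)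
of length `ℓ ∈ [⌊|S|/2⌋]` that equals the reverse complement of the opposite end. -/
def HDel (S T : List Bool) : Prop :=
  ∃ ℓ, 1 ≤ ℓ ∧ ℓ ≤ S.length / 2 ∧ S.take ℓ = rc (S.drop (S.length - ℓ)) ∧
    (T = S.drop ℓ ∨ T = S.take (S.length - ℓ))

/-- `HDelN n S T`: `T` is obtained from `S` by exactly `n` hairpin deletions. -/
def HDelN : ℕ → List Bool → List Bool → Prop
  | 0, S, T => S = T
  | n + 1, S, T => ∃ U, HDel S U ∧ HDelN n U T

/-- hairpin deletion distance (∞ if unreachable) -/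
noncomputable def HDD (x y : List Bool) : ℕ∞ :=
  sInf {n : ℕ∞ | ∃ m : ℕ, n = (m : ℕ∞) ∧ HDelN m x y}

/-- one (modified) hairpin completion step -/
def HComp (S T : List Bool) : Prop :=
  ∃ ℓ, 1 ≤ ℓ ∧ ℓ ≤ S.length ∧
    (T = S ++ rc (S.take ℓ) ∨ T = rc (S.drop (S.length - ℓ)) ++ S)

def HCompN : ℕ → List Bool → List Bool → Prop
  | 0, S, T => S = T
  | n + 1, S, T => ∃ U, HComp S U ∧ HCompN n U T

/-- hairpin completion distance (∞ if unreachable) -/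
noncomputable def HCD (x y : List Bool) : ℕ∞ :=
  sInf {n : ℕ∞ | ∃ m : ℕ, n = (m : ℕ∞) ∧ HCompN m x y}

/-- `w` concatenated with itself `k` times, `w^k` -/
def repL (w : List Bool) (k : ℕ) : List Bool := (List.replicate k w).flatten


lemma hdel_infix {S T : List Bool} (h : HDel S T) : T <:+: S := by
  obtain ⟨ℓ, -, -, -, h | h⟩ := h
  · exact h ▸ (List.drop_suffix ℓ S).isInfix
  · exact h ▸ (List.take_prefix _ S).isInfix

lemma chain_infix_head : ∀ (L : List (List Bool)) (x : List Bool),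
    L.Chain' HDel → L.head? = some x → ∀ S ∈ L, S <:+: x := by
  intro L
  induction L with
  | nil => simp
  | cons z rest ih =>
    intro x hc hh S hS
    simp only [List.head?_cons, Option.some_inj] at hh
    subst hh
    rw [List.mem_cons] at hS
    rcases hS with rfl | hS
    · exact List.infix_refl _
    · match rest, hS with
      | u :: r, hS =>
        simp only [List.Chain', List.isChain_cons_cons] at hc
        exact (ih u hc.2 rfl S hS).trans (hdel_infix hc.1)

lemma chain_infix_last : ∀ (L : List (List Bool)) (y : List Bool),
    L.Chain' HDel → L.getLast? = some y → ∀ S ∈ L, y <:+: S := by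
  intro L
  induction L with
  | nil => simp
  | cons z rest ih =>
    intro y hc hl S hS
    rw [List.mem_cons] at hS
    match rest, hS with
    | [], hS =>
      simp only [List.getLast?_singleton, Option.some_inj] at hl
      rcases hS with rfl | h
      · exact hl ▸ List.infix_refl _
      · simp at h
    | u :: r, hS =>
      simp only [List.Chain', List.isChain_cons_cons] at hc
      have hl' : (u :: r).getLast? = some y := by
        rwa [List.getLast?_cons_cons] at hl
      rcases hS with rfl | hS
      · exact (ih y hc.2 hl' u (List.mem_cons_self (a := u) (l := r))).trans (hdel_infix hc.1)
      · exact ih y hc.2 hl' S hS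

/-- If `x` contains exactly one occurrence of `11·1̄1̄ = 1100`, and `y` is a substring
of `x` containing this occurrence (`x = a ++ y ++ b`), then `y` occurs exactly once
in `x`, and every intermediate string of any sequence of hairpin deletions from `x`
to `y` still contains `y` at the same position (no position of `y` is ever deleted). -/
theorem never_delete_y
    (x y a b : List Bool)
    (hx : x = a ++ y ++ b)
    (hocc : [true, true, false, false] <:+: y)
    (huniq : ∃! i : ℕ, [true, true, false, false] <+: x.drop i) :
    (∀ a' b' : List Bool, x = a' ++ y ++ b' → a' = a ∧ b' = b) ∧
    (∀ L : List (List Bool), L.head? = some x → L.getLast? = some y →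
      L.Chain' HDel →
      ∀ S ∈ L, ∃ a' b' : List Bool, S = a' ++ y ++ b' ∧ a' <:+ a ∧ b' <+: b) := by

  obtain ⟨p, q, hy⟩ := hocc
  have key : ∀ a' b' : List Bool, x = a' ++ y ++ b' →
      [true, true, false, false] <+: x.drop (a'.length + p.length) := by
    intro a' b' hx'
    have : x = (a' ++ p) ++ ([true, true, false, false] ++ (q ++ b')) := by
      rw [hx', ← hy]; simp [List.append_assoc]
    rw [this]
    have hlen : a'.length + p.length = (a' ++ p).length := by simp
    rw [hlen, List.drop_left]
    exact List.prefix_append _ _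
  have part1 : ∀ a' b' : List Bool, x = a' ++ y ++ b' → a' = a ∧ b' = b := by
    intro a' b' hx'
    obtain ⟨i, -, hu⟩ := huniq
    have h1 := hu _ (key a b hx)
    have h2 := hu _ (key a' b' hx')
    have hlen : a'.length = a.length := by omega
    have heq : a' ++ (y ++ b') = a ++ (y ++ b) := by
      rw [← List.append_assoc, ← List.append_assoc, ← hx', ← hx]
    obtain ⟨ha, hb⟩ := List.append_inj heq hlen
    exact ⟨ha, List.append_cancel_left hb⟩
  refine ⟨part1, ?_⟩
  intro L hh hl hc S hS
  have hSx : S <:+: x := chain_infix_head L x hc hh S hS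
  have hyS : y <:+: S := chain_infix_last L y hc hl S hS
  obtain ⟨a'', b'', hS'⟩ := hyS
  obtain ⟨u, v, hxS⟩ := hSx
  have hx' : x = (u ++ a'') ++ y ++ (b'' ++ v) := by
    rw [← hxS, ← hS']; simp [List.append_assoc]
  obtain ⟨ha, hb⟩ := part1 _ _ hx'
  exact ⟨a'', b'', hS'.symm, ⟨u, ha⟩, ⟨v, hb⟩⟩
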